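/- Let G = (V,E) be a graph with a gap-free ordering σ = v_1,…,v_n and suppose two edges v_i v_j and v_{i'} v_{j'} (with i < j, i' < j') cross, i.e., i < i' < j < j' or i' < i < j' < j. Then the two edges belong to the same connected component of G. -/
import Mathlib


/-- Gap condition (g1) for the index pair `(i,j)` under ordering `σ`. -/
def GapG1 {V : Type*} {n : ℕ} (G : SimpleGraph V) (σ : Fin n ≃ V) (i j : Fin n) : Prop :=
  (∃ j' j'' : Fin n, j' < j ∧ j < j'' ∧ G.Adj (σ i) (σ j') ∧ G.Adj (σ i) (σ j'')) ∨
  (∃ i' i'' : Fin n, i' < i ∧ i < i'' ∧ G.Adj (σ i') (σ j) ∧ G.Adj (σ i'') (σ j))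

/-- Gap condition (g2). -/
def GapG2 {V : Type*} {n : ℕ} (G : SimpleGraph V) (σ : Fin n ≃ V) (i j : Fin n) : Prop :=
  ∃ i' j' : Fin n, j' < i ∧ j < i' ∧ G.Adj (σ i) (σ i') ∧ G.Adj (σ j') (σ j)

/-- Gap condition (g3). -/
def GapG3 {V : Type*} {n : ℕ} (G : SimpleGraph V) (σ : Fin n ≃ V) (i j : Fin n) : Prop :=
  ∃ i' j' : Fin n, i' < j ∧ i < j' ∧ G.Adj (σ i) (σ i') ∧ G.Adj (σ j) (σ j')

/-- `σ` is a gap-free ordering of the vertices of `G`: no non-adjacent pair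
satisfies any of (g1), (g2), (g3). -/
def GapFree {V : Type*} {n : ℕ} (G : SimpleGraph V) (σ : Fin n ≃ V) : Prop :=
  ∀ i j : Fin n, i < j → ¬ G.Adj (σ i) (σ j) →
    ¬ (GapG1 G σ i j ∨ GapG2 G σ i j ∨ GapG3 G σ i j)

/-- In a gap-free ordering, two crossing edges belong to the same connected
component of `G` (all four endpoints are mutually reachable). -/
theorem crossing_edges_same_component
    {V : Type*} {n : ℕ} (G : SimpleGraph V) (σ : Fin n ≃ V)
    (hgf : GapFree G σ)
    (i j i' j' : Fin n) (hij : i < j) (hij' : i' < j')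
    (hcross : (i < i' ∧ i' < j ∧ j < j') ∨ (i' < i ∧ i < j' ∧ j' < j))
    (he : G.Adj (σ i) (σ j)) (he' : G.Adj (σ i') (σ j')) :
    G.Reachable (σ i) (σ i') := by
  rcases hcross with ⟨h1, h2, h3⟩ | ⟨h1, h2, h3⟩
  · by_cases hadj : G.Adj (σ i') (σ j)
    · exact he.reachable.trans hadj.symm.reachable
    · exact absurd (Or.inr (Or.inl ⟨j', i, h1, h3, he', he⟩)) (hgf i' j h2 hadj)
  · by_cases hadj : G.Adj (σ i) (σ j')
    · exact hadj.reachable.trans he'.symm.reachable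
    · exact absurd (Or.inr (Or.inl ⟨j, i', h1, h3, he, he'⟩)) (hgf i j' h2 hadj)
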